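/- arXiv:0909.2545 — 5 statements merged into one kernel-verified Lean document; each statement's English description precedes it below -/
import Mathlib

section
/- In the Yokonuma–Hecke algebra Y_{d,n}(u), for every negative even integer m = -2k one has g_i^m = 1 + α'_m e_{d,i} - α'_m e_{d,i} g_i with α'_m = u^{-1}(u^{-1}-1)∑_{l=0}^{k-1} u^{-2l}, and for m = -2k+1 (k ≥ 1) one has g_i^m = g_i - β'_m e_{d,i} + β'_m e_{d,i} g_i with β'_m = (u^{-1}-1)∑_{l=0}^{k-1} u^{-2l}. -/
lemma sum_pow_idem {A : Type*} [Ring A] (x : A) (d : ℕ) (hx : x ^ d = 1) :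
    (∑ m ∈ Finset.range d, x ^ m) * (∑ m ∈ Finset.range d, x ^ m)
      = d • (∑ m ∈ Finset.range d, x ^ m) := by
  set S := ∑ m ∈ Finset.range d, x ^ m with hS
  have hxS : x * S = S := by
    rw [hS, Finset.mul_sum]
    simp only [← pow_succ']
    have h1 := Finset.sum_range_succ' (fun m => x ^ m) d
    rw [Finset.sum_range_succ, hx, pow_zero] at h1
    exact (add_right_cancel h1).symm
  have hxmS : ∀ m : ℕ, x ^ m * S = S := by
    intro m
    induction m with
    | zero => simp
    | succ m ih => rw [pow_succ, mul_assoc, hxS, ih]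
  rw [Finset.sum_mul]
  calc ∑ m ∈ Finset.range d, x ^ m * S = ∑ m ∈ Finset.range d, S :=
        Finset.sum_congr rfl (fun m _ => hxmS m)
    _ = d • S := by rw [Finset.sum_const, Finset.card_range]

lemma key1 {A : Type*} [Ring A] [Algebra ℂ A] {u : ℂ} {E G h : A}
    (hE2 : E * E = E) (hGh : G * h = 1)
    (hform : h = G - (u⁻¹ - 1) • E + (u⁻¹ - 1) • (E * G)) (b : ℂ) :
    (G - b • E + b • (E * G)) * h = 1 + (u⁻¹ * b) • E - (u⁻¹ * b) • (E * G) := by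
  have hEh : E * h = u⁻¹ • (E * G) - (u⁻¹ - 1) • E := by
    rw [hform, mul_add, mul_sub, mul_smul_comm, mul_smul_comm, hE2, ← mul_assoc, hE2]
    module
  have hEGh : (E * G) * h = E := by rw [mul_assoc, hGh, mul_one]
  rw [add_mul, sub_mul, smul_mul_assoc, smul_mul_assoc, hGh, hEh, hEGh]
  module

lemma key2 {A : Type*} [Ring A] [Algebra ℂ A] {u : ℂ} {E G h : A}
    (hE2 : E * E = E) (hGh : G * h = 1)
    (hform : h = G - (u⁻¹ - 1) • E + (u⁻¹ - 1) • (E * G)) (a : ℂ) :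
    (1 + a • E - a • (E * G)) * h
      = G - ((u⁻¹ - 1) + u⁻¹ * a) • E + ((u⁻¹ - 1) + u⁻¹ * a) • (E * G) := by
  have hEh : E * h = u⁻¹ • (E * G) - (u⁻¹ - 1) • E := by
    rw [hform, mul_add, mul_sub, mul_smul_comm, mul_smul_comm, hE2, ← mul_assoc, hE2]
    module
  have hEGh : (E * G) * h = E := by rw [mul_assoc, hGh, mul_one]
  rw [sub_mul, add_mul, smul_mul_assoc, smul_mul_assoc, one_mul, hEh, hEGh, hform]
  module



/-- The Yokonuma–Hecke algebra data: a `ℂ`-algebra `A` together with elements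
`g_0, …, g_{n-2}`, invertible elements `t_0, …, t_{n-1}` and the elements
`e_{d,i} = (1/d) ∑_{m=0}^{d-1} t_i^m t_{i+1}^{-m}`, satisfying the defining
relations of `Y_{d,n}(u)` (braid relations, commuting `t`'s of order dividing `d`,
mixed relations `t_j g_i = g_i t_{s_i(j)}`, and the quadratic relations). -/
structure YokonumaHecke (A : Type*) [Ring A] [Algebra ℂ A] (d n : ℕ) (u : ℂ) where
  g : ℕ → A
  t : ℕ → Aˣ
  e : ℕ → A
  e_def : ∀ i, i + 1 < n →
    e i = (d : ℂ)⁻¹ • ∑ m ∈ Finset.range d, ((t i ^ m * (t (i + 1))⁻¹ ^ m : Aˣ) : A)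
  braid_far : ∀ i j, i + 1 < j → j + 1 < n → g i * g j = g j * g i
  braid : ∀ i, i + 2 < n → g i * g (i + 1) * g i = g (i + 1) * g i * g (i + 1)
  t_comm : ∀ i j, i < n → j < n → t i * t j = t j * t i
  t_ord : ∀ i, i < n → t i ^ d = 1
  mixed : ∀ i j, i + 1 < n → j < n →
    (t j : A) * g i = g i * ((t (if j = i then i + 1 else if j = i + 1 then i else j) : A))
  quad : ∀ i, i + 1 < n → g i ^ 2 = 1 + (u - 1) • e i - (u - 1) • (e i * g i)

/-- In the Yokonuma–Hecke algebra `Y_{d,n}(u)`, for every negative even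
integer `m = -2k` one has `g_i^m = 1 + α′_m e_{d,i} - α′_m e_{d,i} g_i` with
`α′_m = u⁻¹(u⁻¹-1) ∑_{l=0}^{k-1} u^{-2l}`, and for `m = -2k+1` (`k ≥ 1`) one has
`g_i^m = g_i - β′_m e_{d,i} + β′_m e_{d,i} g_i` with `β′_m = (u⁻¹-1) ∑_{l=0}^{k-1} u^{-2l}`.
Here `g_i^{-1}` is represented by the two-sided inverse
`h = g_i - (u⁻¹-1) e_{d,i} + (u⁻¹-1) e_{d,i} g_i`, and `g_i^{-j} = h^j`. -/
theorem yokonuma_negative_powers {A : Type*} [Ring A] [Algebra ℂ A] {d n : ℕ} {u : ℂ}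
    (hd : 0 < d) (hu0 : u ≠ 0) (hu1 : u ≠ 1) (Y : YokonumaHecke A d n u)
    (i : ℕ) (hi : i + 1 < n) (h : A)
    (hform : h = Y.g i - (u⁻¹ - 1) • Y.e i + (u⁻¹ - 1) • (Y.e i * Y.g i))
    (hinv1 : h * Y.g i = 1) (hinv2 : Y.g i * h = 1) :
    ∀ k : ℕ, 1 ≤ k →
      (h ^ (2 * k) =
        1 + (u⁻¹ * (u⁻¹ - 1) * ∑ l ∈ Finset.range k, u⁻¹ ^ (2 * l)) • Y.e i
          - (u⁻¹ * (u⁻¹ - 1) * ∑ l ∈ Finset.range k, u⁻¹ ^ (2 * l)) • (Y.e i * Y.g i)) ∧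
      (h ^ (2 * k - 1) =
        Y.g i - ((u⁻¹ - 1) * ∑ l ∈ Finset.range k, u⁻¹ ^ (2 * l)) • Y.e i
          + ((u⁻¹ - 1) * ∑ l ∈ Finset.range k, u⁻¹ ^ (2 * l)) • (Y.e i * Y.g i)) := by
  -- idempotency of e i
  have hin : i < n := by omega
  have hc : Commute (Y.t i) (Y.t (i + 1)) := Y.t_comm i (i + 1) hin hi
  have hcomm : Commute (Y.t i) ((Y.t (i + 1))⁻¹) := hc.inv_right
  set s : Aˣ := Y.t i * (Y.t (i + 1))⁻¹ with hs
  have hsd : s ^ d = 1 := by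
    rw [hs, hcomm.mul_pow, Y.t_ord i hin, inv_pow, Y.t_ord (i + 1) hi, inv_one, one_mul]
  have hterm : ∀ m : ℕ, ((Y.t i ^ m * (Y.t (i + 1))⁻¹ ^ m : Aˣ) : A) = ((s : A)) ^ m := by
    intro m
    rw [← hcomm.mul_pow, ← Units.val_pow_eq_pow_val]
  have hedef : Y.e i = (d : ℂ)⁻¹ • ∑ m ∈ Finset.range d, ((s : A)) ^ m := by
    rw [Y.e_def i hi]
    congr 1
    exact Finset.sum_congr rfl fun m _ => hterm m
  have hsdA : ((s : A)) ^ d = 1 := by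
    rw [← Units.val_pow_eq_pow_val, hsd, Units.val_one]
  have hE2 : Y.e i * Y.e i = Y.e i := by
    rw [hedef, smul_mul_assoc, mul_smul_comm, smul_smul,
      sum_pow_idem ((s : A)) d hsdA, ← Nat.cast_smul_eq_nsmul ℂ ((d : ℕ)), smul_smul]
    congr 1
    have hdc : (d : ℂ) ≠ 0 := Nat.cast_ne_zero.mpr hd.ne'
    field_simp
  -- scalar sum recursion
  have hS : ∀ k : ℕ, (∑ l ∈ Finset.range (k + 1), u⁻¹ ^ (2 * l))
      = 1 + u⁻¹ ^ 2 * ∑ l ∈ Finset.range k, u⁻¹ ^ (2 * l) := by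
    intro k
    rw [Finset.sum_range_succ', Finset.mul_sum]
    simp only [mul_zero, pow_zero]
    rw [add_comm]
    congr 1
    exact Finset.sum_congr rfl fun l _ => by rw [← pow_add]; ring_nf
  intro k hk
  induction k, hk using Nat.le_induction with
  | base =>
      have hodd : h ^ (2 * 1 - 1) =
          Y.g i - ((u⁻¹ - 1) * ∑ l ∈ Finset.range 1, u⁻¹ ^ (2 * l)) • Y.e i
            + ((u⁻¹ - 1) * ∑ l ∈ Finset.range 1, u⁻¹ ^ (2 * l)) • (Y.e i * Y.g i) := by
        simp only [Finset.sum_range_one, mul_zero, pow_zero, mul_one]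
        simpa using hform
      refine ⟨?_, hodd⟩
      have : h ^ (2 * 1) = h ^ (2 * 1 - 1) * h := by norm_num [pow_succ, sq]
      rw [this, hodd, key1 hE2 hinv2 hform]
      simp only [Finset.sum_range_one, mul_zero, pow_zero, mul_one]
  | succ k hk ih =>
      obtain ⟨ihe, iho⟩ := ih
      have hb : ((u⁻¹ - 1) + u⁻¹ * (u⁻¹ * (u⁻¹ - 1) * ∑ l ∈ Finset.range k, u⁻¹ ^ (2 * l)))
          = (u⁻¹ - 1) * ∑ l ∈ Finset.range (k + 1), u⁻¹ ^ (2 * l) := by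
        rw [hS k]; ring
      have hodd : h ^ (2 * (k + 1) - 1) =
          Y.g i - ((u⁻¹ - 1) * ∑ l ∈ Finset.range (k + 1), u⁻¹ ^ (2 * l)) • Y.e i
            + ((u⁻¹ - 1) * ∑ l ∈ Finset.range (k + 1), u⁻¹ ^ (2 * l)) • (Y.e i * Y.g i) := by
        have hpow : h ^ (2 * (k + 1) - 1) = h ^ (2 * k) * h := by
          have : 2 * (k + 1) - 1 = 2 * k + 1 := by omega
          rw [this, pow_succ]
        rw [hpow, ihe, key2 hE2 hinv2 hform, hb]
      refine ⟨?_, hodd⟩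
      have hpow : h ^ (2 * (k + 1)) = h ^ (2 * (k + 1) - 1) * h := by
        have : 2 * (k + 1) = (2 * (k + 1) - 1) + 1 := by omega
        conv_lhs => rw [this, pow_succ]
      rw [hpow, hodd, key1 hE2 hinv2 hform]
      module
end

section
/- Fix d ≥ 1 and a nonempty subset S of Z/dZ, and define x_k = (1/|S|) ∑_{s∈S} exp(2πisk/d) for 0 ≤ k ≤ d-1. Then x_0 = 1 and the x_k satisfy the E-system: for every m with 1 ≤ m ≤ d-1, E_d^{(m)} = x_m E_d^{(0)}, where E_d^{(m)} = ∑_{s=0}^{d-1} x_{m+s} x_{d-s} with indices taken mod d and x_0 = x_d = 1 by convention. -/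
/-- The solution of the E-system attached to a nonempty subset `S ⊆ ℤ/dℤ`:
`x_k = (1/|S|) ∑_{s ∈ S} exp(2πisk/d)`. -/
noncomputable def solE (d : ℕ) (S : Finset (ZMod d)) (k : ZMod d) : ℂ :=
  (S.card : ℂ)⁻¹ *
    ∑ s ∈ S, Complex.exp (2 * (Real.pi : ℂ) * Complex.I * (s.val : ℂ) * (k.val : ℂ) / (d : ℂ))

/-- The polynomial `E_d^{(m)} = ∑_{s=0}^{d-1} x_{m+s} x_{d-s}` (subscripts mod `d`),
evaluated at a family `x : ℤ/dℤ → ℂ`. -/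
noncomputable def Epoly (d : ℕ) (x : ZMod d → ℂ) (m : ZMod d) : ℂ :=
  ∑ s ∈ Finset.range d, x (m + (s : ZMod d)) * x (-(s : ZMod d))

section aux

variable {d : ℕ} [NeZero d]

lemma solE_eq_char (S : Finset (ZMod d)) (k : ZMod d) :
    solE d S k = (S.card : ℂ)⁻¹ * ∑ s ∈ S, ZMod.stdAddChar (s * k) := by
  unfold solE
  congr 1
  refine Finset.sum_congr rfl fun s _ => ?_
  have : ((s * k : ZMod d)) = ((s.val * k.val : ℤ) : ZMod d) := by
    push_cast
    simp [ZMod.natCast_val, ZMod.cast_id]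
  rw [this, ZMod.stdAddChar_coe]
  push_cast
  ring_nf

lemma sum_range_zmod (f : ZMod d → ℂ) :
    ∑ i ∈ Finset.range d, f (i : ZMod d) = ∑ x : ZMod d, f x := by
  refine Finset.sum_nbij' (fun n => (n : ZMod d)) (fun x => x.val) ?_ ?_ ?_ ?_ ?_
  · intro a ha; exact Finset.mem_univ _
  · intro a _; exact Finset.mem_range.mpr (ZMod.val_lt a)
  · intro a ha; exact ZMod.val_natCast_of_lt (Finset.mem_range.mp ha)
  · intro a _; exact ZMod.natCast_zmod_val a
  · intro a _; rfl

lemma char_orthogonality (t : ZMod d) :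
    ∑ i : ZMod d, ZMod.stdAddChar (t * i) = if t = 0 then (d : ℂ) else 0 := by
  split_ifs with h
  · simp [h, AddChar.map_zero_eq_one, Finset.card_univ, ZMod.card]
  · exact AddChar.sum_eq_zero_of_ne_one (ZMod.isPrimitive_stdAddChar d h)

/-- The key identity: `Epoly d (solE d S) m = (d / |S|) * solE d S m`. -/
lemma Epoly_solE (S : Finset (ZMod d)) (hS : S.Nonempty) (m : ZMod d) :
    Epoly d (solE d S) m = (d : ℂ) * (S.card : ℂ)⁻¹ * solE d S m := by
  have hcard : (S.card : ℂ) ≠ 0 := Nat.cast_ne_zero.mpr (Finset.card_ne_zero.mpr hS)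
  unfold Epoly
  have : ∀ k : ZMod d,
      solE d S (m + k) * solE d S (-k)
        = (S.card : ℂ)⁻¹ * (S.card : ℂ)⁻¹ *
            ∑ s ∈ S, ∑ t ∈ S, ZMod.stdAddChar (s * m) * ZMod.stdAddChar ((s - t) * k) := by
    intro k
    rw [solE_eq_char, solE_eq_char, mul_mul_mul_comm]
    congr 1
    rw [Finset.sum_mul_sum]
    refine Finset.sum_congr rfl fun s _ => Finset.sum_congr rfl fun t _ => ?_
    rw [← AddChar.map_add_eq_mul, ← AddChar.map_add_eq_mul]
    congr 1
    ring
  calc ∑ k ∈ Finset.range d, solE d S (m + (k : ZMod d)) * solE d S (-(k : ZMod d))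
      = ∑ x : ZMod d, solE d S (m + x) * solE d S (-x) :=
        sum_range_zmod (fun x => solE d S (m + x) * solE d S (-x))
    _ = (S.card : ℂ)⁻¹ * (S.card : ℂ)⁻¹ *
          ∑ s ∈ S, ∑ t ∈ S, ZMod.stdAddChar (s * m) *
            ∑ x : ZMod d, ZMod.stdAddChar ((s - t) * x) := by
        simp_rw [this]
        rw [← Finset.mul_sum]
        congr 1
        rw [Finset.sum_comm]
        refine Finset.sum_congr rfl fun s _ => ?_
        rw [Finset.sum_comm]
        refine Finset.sum_congr rfl fun t _ => ?_
        rw [← Finset.mul_sum]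
    _ = (S.card : ℂ)⁻¹ * (S.card : ℂ)⁻¹ *
          ∑ s ∈ S, (d : ℂ) * ZMod.stdAddChar (s * m) := by
        congr 1
        refine Finset.sum_congr rfl fun s hs => ?_
        rw [Finset.sum_eq_single_of_mem s hs]
        · rw [char_orthogonality, sub_self, if_pos rfl]; ring
        · intro t ht hts
          rw [char_orthogonality, if_neg (sub_ne_zero.mpr (Ne.symm hts)), mul_zero]
    _ = (d : ℂ) * (S.card : ℂ)⁻¹ * solE d S m := by
        rw [solE_eq_char, ← Finset.mul_sum]
        ring

end aux

/-- Fix `d ≥ 1` and a nonempty subset `S` of `ℤ/dℤ`, and define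
`x_k = (1/|S|) ∑_{s∈S} exp(2πisk/d)`. Then `x_0 = 1` and the `x_k` satisfy the
E-system: for every `m` with `1 ≤ m ≤ d-1` (i.e. every nonzero `m ∈ ℤ/dℤ`),
`E_d^{(m)} = x_m E_d^{(0)}`. -/
theorem solE_solves_E_system (d : ℕ) (hd : 1 ≤ d) (S : Finset (ZMod d)) (hS : S.Nonempty) :
    solE d S 0 = 1 ∧
    ∀ m : ZMod d, m ≠ 0 → Epoly d (solE d S) m = solE d S m * Epoly d (solE d S) 0 := by
  haveI : NeZero d := ⟨Nat.one_le_iff_ne_zero.mp hd⟩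
  have hcard : (S.card : ℂ) ≠ 0 := Nat.cast_ne_zero.mpr (Finset.card_ne_zero.mpr hS)
  have h0 : solE d S 0 = 1 := by
    rw [solE_eq_char]
    simp [AddChar.map_zero_eq_one, inv_mul_cancel₀ hcard]
  refine ⟨h0, fun m _ => ?_⟩
  rw [Epoly_solE S hS m, Epoly_solE S hS 0, h0, mul_one]
  ring
end

section
/- Every solution (x_1,...,x_{d-1}) ∈ C^{d-1} of the E-system is of the form x_k = (1/|S|) ∑_{s∈S} exp(2πisk/d) for some nonempty subset S ⊆ Z/dZ, and distinct nonempty subsets S give distinct solutions; thus the solutions of the E-system are parametrized by nonempty subsets of Z/dZ. -/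
open Finset

namespace EsysAux

noncomputable def zet (d : ℕ) : ℂ := Complex.exp (2 * Real.pi * Complex.I / d)

variable {d : ℕ} [NeZero d]

lemma zet_prim : IsPrimitiveRoot (zet d) d :=
  Complex.isPrimitiveRoot_exp d (NeZero.ne d)

lemma zet_pow_d : (zet d) ^ d = 1 := zet_prim.pow_eq_one

lemma zet_pow_mod (n : ℕ) : zet d ^ (n % d) = zet d ^ n := by
  conv_rhs => rw [← Nat.mod_add_div n d, pow_add, pow_mul, zet_pow_d, one_pow, mul_one]

noncomputable def chi (a : ZMod d) : ℂ := zet d ^ a.val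

lemma chi_zero : chi (0 : ZMod d) = 1 := by simp [chi]

lemma chi_add (a b : ZMod d) : chi (a + b) = chi a * chi b := by
  rw [chi, chi, chi, ← pow_add, ZMod.val_add, zet_pow_mod]

lemma chi_mul_val (a b : ZMod d) : chi (a * b) = (zet d ^ a.val) ^ b.val := by
  rw [chi, ZMod.val_mul, zet_pow_mod, pow_mul]

lemma sum_zmod (f : ZMod d → ℂ) :
    ∑ i ∈ Finset.range d, f (i : ZMod d) = ∑ a : ZMod d, f a := by
  refine Finset.sum_nbij' (fun i => (i : ZMod d)) (fun a => a.val)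
    (fun i _ => mem_univ _) (fun a _ => mem_range.2 a.val_lt)
    (fun i hi => ZMod.val_cast_of_lt (mem_range.1 hi))
    (fun a _ => ZMod.natCast_zmod_val a) (fun i _ => rfl)

lemma orth (a : ZMod d) : ∑ j : ZMod d, chi (a * j) = if a = 0 then (d : ℂ) else 0 := by
  have h1 : ∑ j : ZMod d, chi (a * j) = ∑ i ∈ Finset.range d, (zet d ^ a.val) ^ i := by
    rw [← sum_zmod (fun j => chi (a * j))]
    refine Finset.sum_congr rfl fun i hi => ?_
    rw [chi_mul_val, ZMod.val_cast_of_lt (mem_range.1 hi)]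
  rw [h1]
  by_cases h : a = 0
  · simp [h, Finset.sum_const]
  · rw [if_neg h]
    have hval : 0 < a.val := Nat.pos_of_ne_zero fun hv => h (by
      have := ZMod.natCast_zmod_val a; rw [hv] at this; simpa using this.symm)
    have hne : zet d ^ a.val ≠ 1 :=
      zet_prim.pow_ne_one_of_pos_of_lt hval.ne' a.val_lt
    rw [geom_sum_eq hne, ← pow_mul, mul_comm, pow_mul, zet_pow_d, one_pow]
    simp

lemma inv_formula (x : ZMod d → ℂ) (k : ZMod d) :
    ∑ j : ZMod d, (∑ t : ZMod d, x t * chi (-(j * t))) * chi (j * k) = d * x k := by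
  have step : ∀ j : ZMod d, (∑ t : ZMod d, x t * chi (-(j * t))) * chi (j * k)
      = ∑ t : ZMod d, x t * chi ((k - t) * j) := by
    intro j
    rw [Finset.sum_mul]
    refine Finset.sum_congr rfl fun t _ => ?_
    rw [mul_assoc, ← chi_add]
    congr 2
    ring
  simp_rw [step]
  rw [Finset.sum_comm]
  have h2 : ∀ t : ZMod d, ∑ j : ZMod d, x t * chi ((k - t) * j)
      = if t = k then (d : ℂ) * x t else 0 := by
    intro t
    rw [← Finset.mul_sum, orth]
    by_cases h : t = k
    · rw [if_pos h, if_pos (by rw [h, sub_self]), mul_comm]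
    · rw [if_neg (sub_ne_zero.2 fun he => h he.symm), if_neg h, mul_zero]
  simp_rw [h2]
  rw [Finset.sum_ite_eq' Finset.univ k (fun t => (d : ℂ) * x t)]
  simp

lemma solE_eq_chi (S : Finset (ZMod d)) (k : ZMod d) :
    solE d S k = (S.card : ℂ)⁻¹ * ∑ s ∈ S, chi (s * k) := by
  unfold solE
  congr 1
  refine Finset.sum_congr rfl fun s _ => ?_
  rw [chi_mul_val, ← pow_mul, zet, ← Complex.exp_nat_mul]
  congr 1
  have hdne : (d : ℂ) ≠ 0 := Nat.cast_ne_zero.2 (NeZero.ne d)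
  field_simp
  push_cast
  ring

lemma fourier_solE (S : Finset (ZMod d)) (j : ZMod d) :
    ∑ k : ZMod d, solE d S k * chi (-(j * k)) =
      if j ∈ S then (d : ℂ) / S.card else 0 := by
  have step : ∀ k : ZMod d, solE d S k * chi (-(j * k))
      = (S.card : ℂ)⁻¹ * ∑ s ∈ S, chi ((s - j) * k) := by
    intro k
    rw [solE_eq_chi, mul_assoc, Finset.sum_mul]
    congr 1
    refine Finset.sum_congr rfl fun s _ => ?_
    rw [← chi_add]
    congr 1
    ring
  simp_rw [step]
  rw [← Finset.mul_sum, Finset.sum_comm]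
  have h2 : ∀ s : ZMod d, ∑ k : ZMod d, chi ((s - j) * k)
      = if s = j then (d : ℂ) else 0 := by
    intro s
    rw [orth]
    by_cases h : s = j
    · rw [if_pos (by rw [h, sub_self]), if_pos h]
    · rw [if_neg (sub_ne_zero.2 h), if_neg h]
  simp_rw [h2]
  rw [Finset.sum_ite_eq' S j (fun _ => (d : ℂ))]
  by_cases h : j ∈ S
  · rw [if_pos h, if_pos h, div_eq_inv_mul]
  · rw [if_neg h, if_neg h, mul_zero]

lemma fourier_conv (x : ZMod d → ℂ) (j : ZMod d) :
    ∑ m : ZMod d, (∑ s : ZMod d, x (m + s) * x (-s)) * chi (-(j * m)) =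
      (∑ t : ZMod d, x t * chi (-(j * t))) ^ 2 := by
  have step1 : ∀ m : ZMod d, (∑ s : ZMod d, x (m + s) * x (-s)) * chi (-(j * m))
      = ∑ s : ZMod d, x (m + s) * x (-s) * chi (-(j * m)) := fun m => Finset.sum_mul ..
  simp_rw [step1]
  rw [Finset.sum_comm]
  have step2 : ∀ s : ZMod d, ∑ m : ZMod d, x (m + s) * x (-s) * chi (-(j * m))
      = (x (-s) * chi (j * s)) * ∑ u : ZMod d, x u * chi (-(j * u)) := by
    intro s
    rw [Finset.mul_sum]
    refine Fintype.sum_equiv (Equiv.addRight s) _ _ fun m => ?_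
    simp only [Equiv.coe_addRight]
    have : chi (-(j * (m + s))) = chi (-(j * m)) * chi (-(j * s)) := by
      rw [← chi_add]; congr 1; ring
    have hinv : chi (j * s) * chi (-(j * s)) = 1 := by
      rw [← chi_add, add_neg_cancel, chi_zero]
    calc x (m + s) * x (-s) * chi (-(j * m))
        = x (m + s) * x (-s) * chi (-(j * m)) * (chi (j * s) * chi (-(j * s))) := by
          rw [hinv, mul_one]
      _ = x (-s) * chi (j * s) * (x (m + s) * (chi (-(j * m)) * chi (-(j * s)))) := by ring
      _ = x (-s) * chi (j * s) * (x (m + s) * chi (-(j * (m + s)))) := by rw [this]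
  simp_rw [step2]
  rw [← Finset.sum_mul, sq]
  congr 1
  refine Fintype.sum_equiv (Equiv.neg (ZMod d)) _ _ fun s => ?_
  simp only [Equiv.neg_apply, neg_neg]
  congr 2
  ring

end EsysAux

/-- Gérardin: Every solution `(x_1, …, x_{d-1})` of the E-system
(with the convention `x_0 = 1`) is of the form `x_k = (1/|S|) ∑_{s∈S} exp(2πisk/d)`
for some nonempty subset `S ⊆ ℤ/dℤ`, and distinct nonempty subsets give distinct
solutions; thus the solutions of the E-system are parametrized by the nonempty
subsets of `ℤ/dℤ`. -/
theorem E_system_solutions_parametrized (d : ℕ) (hd : 0 < d)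
    (x : ZMod d → ℂ) (hx0 : x 0 = 1)
    (hsol : ∀ m : ZMod d, m ≠ 0 → Epoly d x m = x m * Epoly d x 0) :
    ∃! S : Finset (ZMod d), S.Nonempty ∧ ∀ k : ZMod d, x k = solE d S k := by
  haveI : NeZero d := ⟨hd.ne'⟩
  classical
  set F : ZMod d → ℂ := fun j => ∑ t : ZMod d, x t * EsysAux.chi (-(j * t)) with hFdef
  set c : ℂ := Epoly d x 0 with hcdef
  have hdne : (d : ℂ) ≠ 0 := Nat.cast_ne_zero.2 hd.ne'
  have hE : ∀ m : ZMod d, Epoly d x m = ∑ s : ZMod d, x (m + s) * x (-s) := fun m =>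
    EsysAux.sum_zmod (fun s => x (m + s) * x (-s))
  have hconv : ∀ m : ZMod d, (∑ s : ZMod d, x (m + s) * x (-s)) = x m * c := by
    intro m
    by_cases h : m = 0
    · rw [← hE, h, hx0, one_mul, hcdef]
    · rw [← hE, hsol m h]
  -- F j ^ 2 = c * F j
  have hFsq : ∀ j : ZMod d, F j ^ 2 = c * F j := by
    intro j
    rw [hFdef, ← EsysAux.fourier_conv x j]
    calc ∑ m : ZMod d, (∑ s : ZMod d, x (m + s) * x (-s)) * EsysAux.chi (-(j * m))
        = ∑ m : ZMod d, (x m * c) * EsysAux.chi (-(j * m)) := by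
          refine Finset.sum_congr rfl fun m _ => ?_; rw [hconv]
      _ = c * ∑ m : ZMod d, x m * EsysAux.chi (-(j * m)) := by
          rw [Finset.mul_sum]; refine Finset.sum_congr rfl fun m _ => by ring
      _ = c * F j := rfl
  -- inversion
  have hinv : ∀ k : ZMod d, ∑ j : ZMod d, F j * EsysAux.chi (j * k) = d * x k :=
    fun k => EsysAux.inv_formula x k
  have hsum : ∑ j : ZMod d, F j = (d : ℂ) := by
    have h := hinv 0
    simp only [mul_zero, EsysAux.chi_zero, mul_one] at h
    rw [h, hx0, mul_one]
  have hval : ∀ j : ZMod d, F j = 0 ∨ F j = c := by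
    intro j
    have h : F j * (F j - c) = 0 := by rw [mul_sub, ← sq, hFsq j]; ring
    rcases mul_eq_zero.1 h with h | h
    · exact Or.inl h
    · exact Or.inr (sub_eq_zero.1 h)
  set S : Finset (ZMod d) := Finset.univ.filter (fun j => F j ≠ 0) with hSdef
  have hmemS : ∀ j : ZMod d, j ∈ S ↔ F j ≠ 0 := by
    intro j; rw [hSdef, Finset.mem_filter]; simp
  have hSc : ∀ j ∈ S, F j = c := by
    intro j hj
    rcases hval j with h | h
    · exact absurd h ((hmemS j).1 hj)
    · exact h
  have hsumS : ∑ j ∈ S, F j = (d : ℂ) := by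
    rw [← hsum]
    exact Finset.sum_filter_ne_zero Finset.univ
  have hcardc : (S.card : ℂ) * c = (d : ℂ) := by
    rw [← hsumS, Finset.sum_congr rfl hSc, Finset.sum_const, nsmul_eq_mul]
  have hc0 : c ≠ 0 := by
    intro h; rw [h, mul_zero] at hcardc; exact hdne hcardc.symm
  have hcard0 : (S.card : ℂ) ≠ 0 := by
    intro h; rw [h, zero_mul] at hcardc; exact hdne hcardc.symm
  have hSne : S.Nonempty := by
    rw [← Finset.card_pos]
    exact Nat.pos_of_ne_zero fun h => hcard0 (by rw [h]; norm_num)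
  -- x is given by solE d S
  have hx : ∀ k : ZMod d, x k = solE d S k := by
    intro k
    have h1 : ∑ j ∈ S, F j * EsysAux.chi (j * k)
        = ∑ j : ZMod d, F j * EsysAux.chi (j * k) := by
      refine Finset.sum_subset (Finset.filter_subset _ _) ?_
      intro j _ hj
      have hz : F j = 0 := by
        by_contra h; exact hj ((hmemS j).2 h)
      rw [hz, zero_mul]
    have h2 : ∑ j ∈ S, F j * EsysAux.chi (j * k) = c * ∑ j ∈ S, EsysAux.chi (j * k) := by
      rw [Finset.mul_sum]
      exact Finset.sum_congr rfl fun j hj => by rw [hSc j hj]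
    have h3 : (d : ℂ) * x k = c * ∑ j ∈ S, EsysAux.chi (j * k) := by
      rw [← hinv k, ← h1, h2]
    have h4 : x k = (d : ℂ)⁻¹ * (c * ∑ j ∈ S, EsysAux.chi (j * k)) := by
      rw [← h3, inv_mul_cancel_left₀ hdne]
    rw [EsysAux.solE_eq_chi, h4, ← mul_assoc]
    congr 1
    field_simp
    linear_combination hcardc
  refine ⟨S, ⟨hSne, hx⟩, ?_⟩
  rintro T ⟨hTne, hTx⟩
  -- Fourier coefficients of solE T determine T
  have hTcard : (T.card : ℂ) ≠ 0 := Nat.cast_ne_zero.2 hTne.card_pos.ne'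
  have hFT : ∀ j : ZMod d, F j = if j ∈ T then (d : ℂ) / T.card else 0 := by
    intro j
    rw [hFdef, ← EsysAux.fourier_solE T j]
    exact Finset.sum_congr rfl fun k _ => by rw [hTx k]
  ext j
  rw [hmemS j, hFT j]
  by_cases h : j ∈ T
  · simp [h, div_ne_zero hdne hTcard]
  · simp [h]
end

section
/- Suppose tr_d is a linear functional on Y_{d,n+1}(u) satisfying the Markov trace rules (trace property, tr_d(1)=1, tr_d(a g_n) = z tr_d(a) and tr_d(a t_{n+1}^m) = x_m tr_d(a) for a ∈ Y_{d,n}), where the parameters x_m come from a solution X_{d,S} of the E-system. Then for all a ∈ Y_{d,n}: tr_d(a e_{d,n} g_n) = z tr_d(a) and tr_d(a g_n^{-1}) = (1/u)(z + (u-1)/|S|) tr_d(a). -/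
/-- Suppose `tr` is a linear functional on (an algebra modelling)
`Y_{d,n+1}(u)` satisfying the Markov trace rules — trace property, `tr 1 = 1`,
`tr(a g_n) = z·tr a` and `tr(a t_{n+1}^m) = x_m·tr a` for `a ∈ Y_{d,n}` (the
subalgebra `B`) — where the parameters `x_m` come from the solution `X_{d,S}` of the
E-system, and assume the E-condition factorization `tr(a e_{d,n}) = tr(a)/|S|`.
Here `t = t_n`, `t' = t_{n+1}`, `g = g_n`, `e = e_{d,n}` and `ginv = g_n⁻¹` satisfy
the relevant defining relations of the Yokonuma–Hecke algebra. Then for all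
`a ∈ Y_{d,n}`:  `tr(a e_{d,n} g_n) = z·tr a` and
`tr(a g_n⁻¹) = (1/u)(z + (u-1)/|S|)·tr a`. -/
theorem markov_trace_negative_stabilization
    {A : Type*} [Ring A] [Algebra ℂ A] (B : Subalgebra ℂ A)
    (d : ℕ) (hd : 0 < d) (u z : ℂ) (hu0 : u ≠ 0) (hu1 : u ≠ 1)
    (S : Finset (ZMod d)) (hS : S.Nonempty)
    (x : ZMod d → ℂ) (hx : ∀ k, x k = solE d S k)
    (tr : A →ₗ[ℂ] ℂ) (g ginv e : A) (t t' : Aˣ)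
    (htB : (t : A) ∈ B)
    (htt' : t * t' = t' * t) (htd : t ^ d = 1) (ht'd : t' ^ d = 1)
    (hmix1 : (t : A) * g = g * (t' : A)) (hmix2 : (t' : A) * g = g * (t : A))
    (he : e = (d : ℂ)⁻¹ • ∑ m ∈ Finset.range d, ((t ^ m * t'⁻¹ ^ m : Aˣ) : A))
    (hginv : ginv = g - (u⁻¹ - 1) • e + (u⁻¹ - 1) • (e * g))
    (hginv1 : g * ginv = 1) (hginv2 : ginv * g = 1)
    (htr_comm : ∀ a b : A, tr (a * b) = tr (b * a))
    (htr_one : tr 1 = 1)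
    (htr_g : ∀ a ∈ B, tr (a * g) = z * tr a)
    (htr_t : ∀ a ∈ B, ∀ m : ℕ, tr (a * ((t' ^ m : Aˣ) : A)) = x (m : ZMod d) * tr a)
    (htr_e : ∀ a ∈ B, tr (a * e) = (S.card : ℂ)⁻¹ * tr a) :
    ∀ a ∈ B,
      tr (a * e * g) = z * tr a ∧
      tr (a * ginv) = u⁻¹ * (z + (u - 1) * (S.card : ℂ)⁻¹) * tr a := by

  intro a ha
  have hd0 : (d : ℂ) ≠ 0 := Nat.cast_ne_zero.mpr hd.ne'
  -- t⁻¹ lies in B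
  have htinv : (t⁻¹ : Aˣ) = t ^ (d - 1) := by
    have h : t ^ (d - 1) * t = 1 := by
      rw [← pow_succ, Nat.sub_add_cancel hd, htd]
    exact inv_eq_of_mul_eq_one_left h
  have htinvB : ((t⁻¹ : Aˣ) : A) ∈ B := by
    rw [htinv, Units.val_pow_eq_pow_val]
    exact pow_mem htB _
  -- commutation: t'⁻¹ ^ m * g = g * t⁻¹ ^ m in A
  have h1 : ((t'⁻¹ : Aˣ) : A) * g = g * ((t⁻¹ : Aˣ) : A) := by
    have h2 : ((t'⁻¹ : Aˣ) : A) * (g * (t : A)) * ((t⁻¹ : Aˣ) : A)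
        = ((t'⁻¹ : Aˣ) : A) * g := by
      rw [mul_assoc, mul_assoc, ← Units.val_mul, mul_inv_cancel, Units.val_one, mul_one]
    rw [← hmix2] at h2
    rw [← h2, ← mul_assoc, ← Units.val_mul, inv_mul_cancel,
      Units.val_one, one_mul]
  have hcomm : ∀ m : ℕ, ((t'⁻¹ : Aˣ) : A) ^ m * g = g * ((t⁻¹ : Aˣ) : A) ^ m := by
    intro m
    induction m with
    | zero => simp
    | succ k ih =>
      rw [pow_succ, pow_succ, mul_assoc, h1, ← mul_assoc, ih, mul_assoc]
  -- per-term computation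
  have hterm : ∀ m ∈ Finset.range d,
      tr (a * ((t ^ m * t'⁻¹ ^ m : Aˣ) : A) * g) = z * tr a := by
    intro m _
    have hval : ((t ^ m * t'⁻¹ ^ m : Aˣ) : A)
        = ((t : A)) ^ m * ((t'⁻¹ : Aˣ) : A) ^ m := by
      rw [Units.val_mul, Units.val_pow_eq_pow_val, Units.val_pow_eq_pow_val]
    have hcancel : ((t : A)) ^ m * ((t⁻¹ : Aˣ) : A) ^ m = 1 := by
      rw [← Units.val_pow_eq_pow_val, ← Units.val_pow_eq_pow_val, ← Units.val_mul,
        inv_pow, mul_inv_cancel, Units.val_one]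
    have hmemB : ((t⁻¹ : Aˣ) : A) ^ m * a * ((t : A)) ^ m ∈ B :=
      mul_mem (mul_mem (pow_mem htinvB m) ha) (pow_mem htB m)
    have hback : tr (((t⁻¹ : Aˣ) : A) ^ m * a * ((t : A)) ^ m) = tr a := by
      rw [mul_assoc, htr_comm, mul_assoc, hcancel, mul_one]
    calc tr (a * ((t ^ m * t'⁻¹ ^ m : Aˣ) : A) * g)
        = tr (a * (t : A) ^ m * g * ((t⁻¹ : Aˣ) : A) ^ m) := by
          rw [hval, ← mul_assoc, mul_assoc (a * (t : A) ^ m), hcomm, ← mul_assoc]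
      _ = tr (((t⁻¹ : Aˣ) : A) ^ m * (a * (t : A) ^ m * g)) := htr_comm _ _
      _ = tr (((t⁻¹ : Aˣ) : A) ^ m * a * ((t : A)) ^ m * g) := by
          rw [← mul_assoc, ← mul_assoc]
      _ = z * tr (((t⁻¹ : Aˣ) : A) ^ m * a * ((t : A)) ^ m) := htr_g _ hmemB
      _ = z * tr a := by rw [hback]
  -- first statement
  have hfirst : tr (a * e * g) = z * tr a := by
    rw [he, mul_smul_comm, smul_mul_assoc, map_smul, Finset.mul_sum, Finset.sum_mul,
      map_sum, Finset.sum_congr rfl hterm, Finset.sum_const, Finset.card_range,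
      nsmul_eq_mul, smul_eq_mul]
    field_simp
  refine ⟨hfirst, ?_⟩
  have haeg : tr (a * (e * g)) = z * tr a := by rw [← mul_assoc]; exact hfirst
  have : tr (a * ginv) = z * tr a - (u⁻¹ - 1) * ((S.card : ℂ)⁻¹ * tr a)
      + (u⁻¹ - 1) * (z * tr a) := by
    rw [hginv, mul_add, mul_sub, mul_smul_comm, mul_smul_comm, map_add, map_sub,
      map_smul, map_smul, smul_eq_mul, smul_eq_mul, htr_g a ha, htr_e a ha, haeg]
  rw [this]
  linear_combination (-(S.card : ℂ)⁻¹ * tr a) * inv_mul_cancel₀ hu0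
end

section
/- Assume an invariant Δ of braid closures is defined by Δ(closure of α) = D^{n-1} (√λ)^{ε(α)} tr_d(♭(α)) for α ∈ B_n, where ♭ : B_n → Y_{d,n}(u) sends σ_i to g_i, ε is the exponent sum, and tr_d satisfies the Markov trace rules with E-condition parameters. Then Δ satisfies the cubic skein relation √λ · Δ(L_-) = (1/(λu)) Δ(L_{++}) + (1/√λ) Δ(L_+) - (1/u) Δ(L_0), where for β ∈ B_n, L_0 = closure(β), L_+ = closure(βσ_i), L_{++} = closure(βσ_i^2), L_- = closure(βσ_i^{-1}). -/
/-- Assume an invariant `Δ` of braid closures is given on the closures of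
`β`, `βσᵢ`, `βσᵢ²`, `βσᵢ⁻¹` (for `β ∈ Bₙ` with exponent sum `ε`) by
`Δ = D^{n-1} (√λ)^{ε(·)} tr_d(♭(·))`, where `♭(β) = b`, `♭(σᵢ) = gᵢ`, `tr_d` is the
`ℂ`-linear Markov trace on `Y_{d,n}(u)`, and the generators satisfy the cubic relation
`gᵢ⁻¹ = u⁻¹ gᵢ² + gᵢ - u⁻¹`. Then `Δ` satisfies the cubic skein relation
`√λ Δ(L₋) = (1/(λu)) Δ(L₊₊) + (1/√λ) Δ(L₊) - (1/u) Δ(L₀)`. -/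
theorem cubic_skein_relation {A : Type*} [Ring A] [Algebra ℂ A]
    (u z lam sqlam D : ℂ) (hu0 : u ≠ 0) (hu1 : u ≠ 1)
    (hsq : sqlam ^ 2 = lam) (hlam0 : lam ≠ 0)
    (n : ℕ) (ε : ℤ)
    (tr : A →ₗ[ℂ] ℂ) (b g ginv : A)
    (hcubic : ginv = u⁻¹ • g ^ 2 + g - u⁻¹ • (1 : A))
    (hginv1 : g * ginv = 1) (hginv2 : ginv * g = 1)
    (ΔL0 ΔLp ΔLpp ΔLm : ℂ)
    (hΔL0 : ΔL0 = D ^ (n - 1) * sqlam ^ ε * tr b)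
    (hΔLp : ΔLp = D ^ (n - 1) * sqlam ^ (ε + 1) * tr (b * g))
    (hΔLpp : ΔLpp = D ^ (n - 1) * sqlam ^ (ε + 2) * tr (b * g ^ 2))
    (hΔLm : ΔLm = D ^ (n - 1) * sqlam ^ (ε - 1) * tr (b * ginv)) :
    sqlam * ΔLm = (1 / (lam * u)) * ΔLpp + (1 / sqlam) * ΔLp - (1 / u) * ΔL0 := by
  have hs0 : sqlam ≠ 0 := by
    intro h; apply hlam0; rw [← hsq, h]; ring
  have hb : b * ginv = u⁻¹ • (b * g ^ 2) + b * g - u⁻¹ • b := by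
    rw [hcubic]; simp [mul_add, mul_sub, mul_smul_comm]
  have htr : tr (b * ginv) = u⁻¹ * tr (b * g ^ 2) + tr (b * g) - u⁻¹ * tr b := by
    rw [hb]; simp [map_add, map_sub, map_smul, smul_eq_mul]
  have h1 : sqlam ^ (ε + 1) = sqlam ^ ε * sqlam := zpow_add_one₀ hs0 ε
  have h2 : sqlam ^ (ε + 2) = sqlam ^ ε * lam := by
    rw [show ε + 2 = ε + 1 + 1 by ring, zpow_add_one₀ hs0, h1, ← hsq]; ring
  have h3 : sqlam ^ (ε - 1) = sqlam ^ ε / sqlam := zpow_sub_one₀ hs0 ε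
  rw [hΔL0, hΔLp, hΔLpp, hΔLm, htr, h1, h2, h3]
  field_simp
end
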